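/- Let R be a reduced root system with positive roots R⁺, let χ be a linear functional with Z(χ) = {α ∈ R⁺ : χ(α) = 0}, let α ∈ Z(χ) and β ∈ P(χ) with ⟨β, α∨⟩ < 0. For any Weyl group element w with R(w) ∩ Z(χ) = ∅ (where R(w) is the inversion set of w): if w(s_α(β)) is a negative root, then w(β) is a negative root. -/

import Mathlib

open scoped Classical

/-- A reduced root system in a real vector space, with a fixed positive system
determined by a set of simple roots. -/
structure RootSystemData (V : Type*) [AddCommGroup V] [Module ℝ V] where
  /-- the set of roots -/
  R : Set V
  /-- the coroot attached to each root, viewed as a linear functional -/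
  coroot : V → V →ₗ[ℝ] ℝ
  /-- the set of positive roots -/
  pos : Set V
  /-- the set of simple roots -/
  simple : Set V
  finite : R.Finite
  pos_subset : pos ⊆ R
  simple_subset : simple ⊆ pos
  root_ne_zero : ∀ α ∈ R, α ≠ 0
  coroot_self : ∀ α ∈ R, coroot α α = 2
  neg_mem : ∀ α ∈ R, -α ∈ R
  pos_or_neg : ∀ α ∈ R, α ∈ pos ∨ -α ∈ pos
  not_both : ∀ α ∈ R, α ∈ pos → -α ∉ pos
  reduced : ∀ α ∈ R, (2 : ℝ) • α ∉ R
  reflect_mem : ∀ α ∈ R, ∀ β ∈ R, β - coroot α β • α ∈ R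
  simple_reflect_pos : ∀ α ∈ simple, ∀ β ∈ pos, β ≠ α → β - coroot α β • α ∈ pos
  pos_combo : ∀ β ∈ pos, ∃ f : V →₀ ℝ,
    ↑f.support ⊆ simple ∧ (∀ γ, 0 ≤ f γ) ∧ β = f.sum fun γ k => k • γ

namespace RootSystemData

variable {V : Type*} [AddCommGroup V] [Module ℝ V]

/-- The reflection `s_α` applied to `β`: `s_α(β) = β − ⟨β, α∨⟩ α`. -/
def reflect (P : RootSystemData V) (α β : V) : V := β - P.coroot α β • α

end RootSystemData

namespace RootSystemData

variable {V : Type*} [AddCommGroup V] [Module ℝ V]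

variable (P : RootSystemData V)

lemma reflect_reflect {α : V} (hα : α ∈ P.R) (x : V) :
    P.reflect α (P.reflect α x) = x := by
  simp only [reflect, map_sub, map_smul, P.coroot_self α hα, smul_eq_mul, sub_smul, mul_smul]
  module

lemma reflect_self {α : V} (hα : α ∈ P.R) : P.reflect α α = -α := by
  simp [reflect, P.coroot_self α hα, two_smul]

lemma reflect_inj {α : V} (hα : α ∈ P.R) {x y : V}
    (h : P.reflect α x = P.reflect α y) : x = y := by
  have := congrArg (P.reflect α) h
  rwa [P.reflect_reflect hα, P.reflect_reflect hα] at this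

/-- reflection by a simple root permutes pos minus the root -/
lemma reflect_mem_pos_diff {α : V} (hα : α ∈ P.simple) {x : V}
    (hx : x ∈ P.pos) (hxα : x ≠ α) :
    P.reflect α x ∈ P.pos ∧ P.reflect α x ≠ α := by
  have hαR : α ∈ P.R := P.pos_subset (P.simple_subset hα)
  refine ⟨P.simple_reflect_pos α hα x hx hxα, ?_⟩
  intro h
  have : x = -α := by
    have := congrArg (P.reflect α) h
    rw [P.reflect_reflect hαR, P.reflect_self hαR] at this
    exact this
  subst this
  exact P.not_both α hαR (P.simple_subset hα) hx


noncomputable def posFinset : Finset V := (P.finite.subset P.pos_subset).toFinset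

lemma mem_posFinset {x : V} : x ∈ P.posFinset ↔ x ∈ P.pos := by
  simp [posFinset]

noncomputable def rho : V := ∑ γ ∈ P.posFinset, γ

lemma reflect_sum_erase {α : V} (hα : α ∈ P.simple) :
    ∑ γ ∈ P.posFinset.erase α, P.reflect α γ = ∑ γ ∈ P.posFinset.erase α, γ := by
  have hαR : α ∈ P.R := P.pos_subset (P.simple_subset hα)
  refine Finset.sum_nbij' (fun γ => P.reflect α γ) (fun γ => P.reflect α γ) ?_ ?_ ?_ ?_ ?_
  · intro γ hγ
    rw [Finset.mem_erase, P.mem_posFinset] at hγ ⊢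
    have := P.reflect_mem_pos_diff hα hγ.2 hγ.1
    exact ⟨this.2, this.1⟩
  · intro γ hγ
    rw [Finset.mem_erase, P.mem_posFinset] at hγ ⊢
    have := P.reflect_mem_pos_diff hα hγ.2 hγ.1
    exact ⟨this.2, this.1⟩
  · intro γ _; exact P.reflect_reflect hαR γ
  · intro γ _; exact P.reflect_reflect hαR γ
  · intro γ _; rfl

lemma coroot_rho {α : V} (hα : α ∈ P.simple) : P.coroot α P.rho = 2 := by
  have hαR : α ∈ P.R := P.pos_subset (P.simple_subset hα)
  have hαpos : α ∈ P.pos := P.simple_subset hα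
  have hmem : α ∈ P.posFinset := P.mem_posFinset.mpr hαpos
  have key : ∑ γ ∈ P.posFinset, P.reflect α γ = P.rho - (2:ℝ) • α := by
    rw [← Finset.add_sum_erase _ _ hmem, P.reflect_sum_erase hα, P.reflect_self hαR,
      rho, ← Finset.add_sum_erase _ _ hmem]
    rw [two_smul]
    abel
  have key2 : ∑ γ ∈ P.posFinset, P.reflect α γ = P.rho - P.coroot α P.rho • α := by
    simp only [reflect, Finset.sum_sub_distrib, ← Finset.sum_smul, rho, map_sum]
  have : P.coroot α P.rho • α = (2:ℝ) • α := by
    rw [key] at key2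
    exact (sub_right_inj.mp key2).symm
  have h2 : (P.coroot α P.rho - 2) • α = 0 := by
    rw [sub_smul, this, sub_self]
  rcases smul_eq_zero.mp h2 with h|h
  · linarith [sub_eq_zero.mp h]
  · exact absurd h (P.root_ne_zero α hαR)


/-- span of the roots -/
noncomputable def U : Submodule ℝ V := Submodule.span ℝ P.R

lemma mem_U_of_R {x : V} (hx : x ∈ P.R) : x ∈ P.U := Submodule.subset_span hx

lemma mem_U_of_pos {x : V} (hx : x ∈ P.pos) : x ∈ P.U := P.mem_U_of_R (P.pos_subset hx)

lemma mem_U_of_simple {x : V} (hx : x ∈ P.simple) : x ∈ P.U :=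
  P.mem_U_of_pos (P.simple_subset hx)

lemma rho_mem_U : P.rho ∈ P.U := by
  apply Submodule.sum_mem
  intro γ hγ
  exact P.mem_U_of_pos (P.mem_posFinset.mp hγ)

/-- the reflection in a root, as a linear endomorphism of `U` -/
noncomputable def sL (α : V) (hα : α ∈ P.R) : ↥P.U →ₗ[ℝ] ↥P.U where
  toFun x := ⟨P.reflect α x, sub_mem x.2 (Submodule.smul_mem _ _ (P.mem_U_of_R hα))⟩
  map_add' x y := by
    ext
    simp only [reflect, Submodule.coe_add, map_add, add_smul]
    abel
  map_smul' k x := by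
    ext
    simp only [reflect, SetLike.val_smul, map_smul, RingHom.id_apply, smul_sub,
      smul_eq_mul, mul_smul]

lemma sL_involutive (α : V) (hα : α ∈ P.R) : Function.Involutive (P.sL α hα) := by
  intro x
  ext
  exact P.reflect_reflect hα x

/-- the reflection in a root, as a linear automorphism of `U` -/
noncomputable def sE (α : V) (hα : α ∈ P.R) : ↥P.U ≃ₗ[ℝ] ↥P.U :=
  LinearEquiv.ofInvolutive (P.sL α hα) (P.sL_involutive α hα)

@[simp] lemma sE_apply (α : V) (hα : α ∈ P.R) (x : ↥P.U) :
    (P.sE α hα x : V) = P.reflect α x := rfl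

lemma sE_inv (α : V) (hα : α ∈ P.R) : (P.sE α hα)⁻¹ = P.sE α hα := rfl

/-- the subgroup generated by the simple reflections -/
noncomputable def G : Subgroup (↥P.U ≃ₗ[ℝ] ↥P.U) :=
  Subgroup.closure {g | ∃ α, ∃ hα : α ∈ P.simple, g = P.sE α (P.pos_subset (P.simple_subset hα))}


lemma G_maps_R : ∀ g ∈ P.G, ∀ x : ↥P.U, (x : V) ∈ P.R →
    ((g x : ↥P.U) : V) ∈ P.R ∧ ((g⁻¹ x : ↥P.U) : V) ∈ P.R := by
  intro g hg
  induction hg using Subgroup.closure_induction with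
  | mem g hgen =>
    obtain ⟨α, hα, rfl⟩ := hgen
    have hαR : α ∈ P.R := P.pos_subset (P.simple_subset hα)
    intro x hx
    rw [P.sE_inv]
    exact ⟨P.reflect_mem α hαR x hx, P.reflect_mem α hαR x hx⟩
  | one => intro x hx; rw [inv_one]; exact ⟨hx, hx⟩
  | mul a b ha hb iha ihb =>
    intro x hx
    constructor
    · have h1 := (ihb x hx).1
      exact (iha _ h1).1
    · have h1 := (iha x hx).2
      have := (ihb _ h1).2
      rw [mul_inv_rev]
      exact this
  | inv a ha iha =>
    intro x hx
    refine ⟨(iha x hx).2, ?_⟩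
    rw [inv_inv]
    exact (iha x hx).1

/-- roots inside `U` -/
def RU : Set ↥P.U := Subtype.val ⁻¹' P.R

lemma RU_finite : P.RU.Finite :=
  P.finite.preimage Subtype.val_injective.injOn

lemma span_RU : Submodule.span ℝ P.RU = ⊤ := by
  apply Submodule.map_injective_of_injective (f := P.U.subtype) P.U.injective_subtype
  rw [Submodule.map_span, Submodule.map_top, Submodule.range_subtype]
  have himg : P.U.subtype '' P.RU = P.R := by
    apply Set.image_preimage_eq_of_subset
    intro x hx
    exact ⟨⟨x, P.mem_U_of_R hx⟩, rfl⟩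
  rw [himg]
  rfl


lemma G_finite : Finite ↥P.G := by
  have : Finite ↥P.RU := P.RU_finite
  refine Finite.of_injective
    (fun g : ↥P.G => fun x : ↥P.RU => (⟨g.1 x.1, (P.G_maps_R g.1 g.2 x.1 x.2).1⟩ : ↥P.RU)) ?_
  intro g h hgh
  have heq : ∀ x ∈ P.RU, g.1 x = h.1 x := by
    intro x hx
    have := congrFun hgh ⟨x, hx⟩
    exact Subtype.ext_iff.mp this
  apply Subtype.ext
  apply LinearEquiv.toLinearMap_injective
  exact LinearMap.ext_on P.span_RU heq

/-- any finite-dimensional real vector space has a symmetric positive definite form -/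
lemma exists_posdef_form (W : Type*) [AddCommGroup W] [Module ℝ W] [FiniteDimensional ℝ W] :
    ∃ B0 : W →ₗ[ℝ] W →ₗ[ℝ] ℝ, (∀ x y, B0 x y = B0 y x) ∧ (∀ x, 0 ≤ B0 x x) ∧
      (∀ x : W, x ≠ 0 → 0 < B0 x x) := by
  set b := Module.finBasis ℝ W with hb
  set B0 : W →ₗ[ℝ] W →ₗ[ℝ] ℝ := LinearMap.mk₂ ℝ
    (fun x y => ∑ i, b.repr x i * b.repr y i)
    (by intro x x' y; simp [map_add, Finsupp.add_apply, add_mul, Finset.sum_add_distrib])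
    (by intro k x y; simp [map_smul, Finsupp.smul_apply, smul_eq_mul, mul_assoc, Finset.mul_sum])
    (by intro x y y'; simp [map_add, Finsupp.add_apply, mul_add, Finset.sum_add_distrib])
    (by intro k x y; simp [map_smul, Finsupp.smul_apply, smul_eq_mul, Finset.mul_sum];
        ring_nf; simp [mul_assoc, mul_comm, mul_left_comm]) with hB0
  have hB0_apply : ∀ x y, B0 x y = ∑ i, b.repr x i * b.repr y i := fun x y => rfl
  refine ⟨B0, ?_, ?_, ?_⟩
  · intro x y; simp only [hB0_apply]; exact Finset.sum_congr rfl fun i _ => mul_comm _ _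
  · intro x; rw [hB0_apply]; exact Finset.sum_nonneg fun i _ => mul_self_nonneg _
  · intro x hx
    rw [hB0_apply]
    have : b.repr x ≠ 0 := fun h => hx (by simpa using congrArg b.repr.symm h)
    obtain ⟨i, hi⟩ := Finsupp.ne_iff.mp this
    simp only [Finsupp.coe_zero, Pi.zero_apply] at hi
    refine Finset.sum_pos' (fun j _ => mul_self_nonneg _) ⟨i, Finset.mem_univ i, ?_⟩
    exact mul_self_pos.mpr hi

set_option maxHeartbeats 1000000 in
/-- existence of the invariant positive definite symmetric bilinear form -/
lemma exists_form : ∃ B : ↥P.U →ₗ[ℝ] ↥P.U →ₗ[ℝ] ℝ,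
    (∀ x y, B x y = B y x) ∧ (∀ x : ↥P.U, x ≠ 0 → 0 < B x x) ∧
    (∀ (α : V) (hα : α ∈ P.simple) (x : ↥P.U),
      2 * B x ⟨α, P.mem_U_of_simple hα⟩ =
        P.coroot α x * B ⟨α, P.mem_U_of_simple hα⟩ ⟨α, P.mem_U_of_simple hα⟩) := by
  haveI : FiniteDimensional ℝ ↥P.U := FiniteDimensional.span_of_finite ℝ P.finite
  haveI : Finite ↥P.G := P.G_finite
  haveI : Fintype ↥P.G := Fintype.ofFinite _
  obtain ⟨B0, hB0_symm, hB0_nonneg, hB0_pos⟩ := exists_posdef_form ↥P.U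
  -- averaged form
  set B : ↥P.U →ₗ[ℝ] ↥P.U →ₗ[ℝ] ℝ := LinearMap.mk₂ ℝ
    (fun x y => ∑ g : ↥P.G, B0 (g.1 x) (g.1 y))
    (by intro x x' y; simp [map_add, Finset.sum_add_distrib])
    (by intro k x y; simp [map_smul, Finset.mul_sum])
    (by intro x y y'; simp [map_add, Finset.sum_add_distrib])
    (by intro k x y; simp [map_smul, Finset.mul_sum]) with hB
  have hB_apply : ∀ x y, B x y = ∑ g : ↥P.G, B0 (g.1 x) (g.1 y) := fun x y => rfl
  have hB_symm : ∀ x y, B x y = B y x := by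
    intro x y; simp only [hB_apply]
    exact Finset.sum_congr rfl fun g _ => hB0_symm _ _
  have hB_pos : ∀ x : ↥P.U, x ≠ 0 → 0 < B x x := by
    intro x hx
    rw [hB_apply]
    refine Finset.sum_pos' (fun g _ => hB0_nonneg _) ⟨1, Finset.mem_univ _, ?_⟩
    exact hB0_pos _ (by simpa using hx)
  have hB_inv : ∀ h : ↥P.G, ∀ x y, B (h.1 x) (h.1 y) = B x y := by
    intro h x y
    simp only [hB_apply]
    refine Fintype.sum_equiv (Equiv.mulRight h) _ _ ?_
    intro g
    rfl
  refine ⟨B, hB_symm, hB_pos, ?_⟩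
  intro α hα x
  have hαR : α ∈ P.R := P.pos_subset (P.simple_subset hα)
  set αU : ↥P.U := ⟨α, P.mem_U_of_simple hα⟩ with hαU
  have hmemG : P.sE α hαR ∈ P.G :=
    Subgroup.subset_closure ⟨α, hα, rfl⟩
  have hrefl : P.sE α hαR αU = -αU := by
    apply Subtype.ext
    simpa using P.reflect_self hαR
  have hreflx : P.sE α hαR x = x - P.coroot α x • αU := by
    apply Subtype.ext
    simp [RootSystemData.reflect]
    rfl
  have := hB_inv ⟨P.sE α hαR, hmemG⟩ x αU
  rw [hrefl, hreflx] at this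
  simp only [map_sub, map_smul, map_neg, LinearMap.sub_apply, LinearMap.smul_apply,
    LinearMap.neg_apply, smul_eq_mul] at this
  have hsymm := hB_symm αU x
  nlinarith [this, hsymm]

/-- a nonnegative combination of simple roots vanishes only trivially -/
lemma combo_eq_zero (c : V →₀ ℝ) (hsupp : ↑c.support ⊆ P.simple) (hnn : ∀ γ, 0 ≤ c γ)
    (hsum : (c.sum fun γ k => k • γ) = 0) : ∀ γ, c γ = 0 := by
  obtain ⟨B, hsymm, hpos, hkey⟩ := P.exists_form
  have hmem : ∀ γ ∈ c.support, γ ∈ P.simple := fun γ h => hsupp h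
  have main : ∀ γ ∈ c.support, c γ = 0 := by
    set uc : ↥P.U := ∑ γ ∈ c.support.attach,
      c γ.1 • (⟨γ.1, P.mem_U_of_simple (hmem γ.1 γ.2)⟩ : ↥P.U) with huc
    have hcoe : P.U.subtype uc = c.sum fun γ k => k • γ := by
      rw [huc, map_sum]
      simp only [map_smul, Submodule.coe_subtype]
      rw [Finset.sum_attach c.support (fun γ => c γ • γ)]
      rfl
    have huc0 : uc = 0 := by
      apply P.U.injective_subtype
      rw [hcoe, hsum, map_zero]
    set rhoU : ↥P.U := ⟨P.rho, P.rho_mem_U⟩ with hrhoU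
    have h0 : B rhoU uc = 0 := by rw [huc0, map_zero]
    rw [huc, map_sum] at h0
    simp only [map_smul, smul_eq_mul] at h0
    have hterm : ∀ γ : {x // x ∈ c.support},
        B rhoU ⟨γ.1, P.mem_U_of_simple (hmem γ.1 γ.2)⟩ =
          B ⟨γ.1, P.mem_U_of_simple (hmem γ.1 γ.2)⟩ ⟨γ.1, P.mem_U_of_simple (hmem γ.1 γ.2)⟩ := by
      intro γ
      have h1 := hkey γ.1 (hmem γ.1 γ.2) rhoU
      rw [hrhoU] at h1
      simp only [P.coroot_rho (hmem γ.1 γ.2)] at h1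
      have := hsymm rhoU ⟨γ.1, P.mem_U_of_simple (hmem γ.1 γ.2)⟩
      nlinarith [h1]
    have hterm_pos : ∀ γ : {x // x ∈ c.support},
        0 < B rhoU ⟨γ.1, P.mem_U_of_simple (hmem γ.1 γ.2)⟩ := by
      intro γ
      rw [hterm γ]
      apply hpos
      intro h
      have : (γ.1 : V) = 0 := congrArg Subtype.val h
      exact P.root_ne_zero γ.1 (P.pos_subset (P.simple_subset (hmem γ.1 γ.2))) this
    intro γ hγ
    have hz := (Finset.sum_eq_zero_iff_of_nonneg (fun i _ => by
      have := hterm_pos i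
      have := hnn i.1
      positivity)).mp h0 ⟨γ, hγ⟩ (Finset.mem_attach _ _)
    rcases mul_eq_zero.mp hz with h|h
    · exact h
    · exact absurd h (ne_of_gt (hterm_pos ⟨γ, hγ⟩))
  intro γ
  by_cases hγ : γ ∈ c.support
  · exact main γ hγ
  · exact Finsupp.notMem_support_iff.mp hγ


/-- a positive root plus a positive multiple of a positive root, if a root, is positive -/
lemma add_smul_mem_pos {p q : V} (hp : p ∈ P.pos) (hq : q ∈ P.pos) {m : ℝ}
    (hm : 0 < m) (hz : p + m • q ∈ P.R) : p + m • q ∈ P.pos := by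
  rcases P.pos_or_neg _ hz with h | h
  · exact h
  · exfalso
    obtain ⟨f, hfs, hfn, hfe⟩ := P.pos_combo p hp
    obtain ⟨g, hgs, hgn, hge⟩ := P.pos_combo q hq
    obtain ⟨r, hrs, hrn, hre⟩ := P.pos_combo _ h
    set cc : V →₀ ℝ := f + m • g + r with hcc
    have hccsupp : ↑cc.support ⊆ P.simple := by
      intro γ hγ
      have := Finsupp.support_add (g₁ := f + m • g) (g₂ := r) (Finset.mem_coe.mp hγ)
      rcases Finset.mem_union.mp this with h1 | h1
      · rcases Finset.mem_union.mp (Finsupp.support_add h1) with h2 | h2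
        · exact hfs h2
        · exact hgs (Finsupp.support_smul h2)
      · exact hrs h1
    have hccnn : ∀ γ, 0 ≤ cc γ := by
      intro γ
      simp only [hcc, Finsupp.add_apply, Finsupp.smul_apply, smul_eq_mul]
      have := hfn γ; have := hgn γ; have := hrn γ
      nlinarith
    have hccsum : (cc.sum fun γ k => k • γ) = 0 := by
      rw [hcc]
      rw [Finsupp.sum_add_index' (fun a => zero_smul ℝ a) (fun a b₁ b₂ => add_smul b₁ b₂ a)]
      rw [Finsupp.sum_add_index' (fun a => zero_smul ℝ a) (fun a b₁ b₂ => add_smul b₁ b₂ a)]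
      rw [Finsupp.sum_smul_index (fun i => zero_smul ℝ i)]
      have : (g.sum fun i a => (m * a) • i) = m • (g.sum fun i a => a • i) := by
        rw [Finsupp.smul_sum]
        exact Finsupp.sum_congr fun i _ => (mul_smul m _ i)
      rw [this, ← hfe, ← hge, ← hre]
      abel
    have := P.combo_eq_zero cc hccsupp hccnn hccsum
    have hf0 : ∀ γ, f γ = 0 := by
      intro γ
      have h1 := this γ
      simp only [hcc, Finsupp.add_apply, Finsupp.smul_apply, smul_eq_mul] at h1
      have := hfn γ; have := hgn γ; have := hrn γ
      nlinarith
    have : p = 0 := by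
      rw [hfe]
      apply Finset.sum_eq_zero
      intro γ _
      simp [hf0 γ]
    exact P.root_ne_zero p (P.pos_subset hp) this

end RootSystemData
/-- let `α ∈ Z(χ)` (a positive root with `χ(α) = 0`) and
`β ∈ P(χ)` with `⟨β, α∨⟩ < 0`.  For any root-preserving `w` whose inversion
set avoids `Z(χ)` (i.e. `w` sends every positive root killed by `χ` to a
positive root): if `w(s_α(β))` is a negative root then `w(β)` is a negative
root. -/
theorem neg_of_reflect_neg {V : Type*} [AddCommGroup V] [Module ℝ V]
    (P : RootSystemData V) (c : V → ℝ) (χ : V →ₗ[ℝ] ℝ)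
    (α : V) (hα : α ∈ P.pos) (hχα : χ α = 0)
    (β : V) (hβ : β ∈ P.R) (hβP : χ β = c β)
    (hpair : P.coroot α β < 0)
    (w : V ≃ₗ[ℝ] V) (hwR : ∀ γ ∈ P.R, w γ ∈ P.R)
    (hinv : ∀ γ ∈ P.pos, χ γ = 0 → w γ ∈ P.pos) :
    -(w (P.reflect α β)) ∈ P.pos → -(w β) ∈ P.pos := by
  intro h
  have hq : w α ∈ P.pos := hinv α hα hχα
  have hm : 0 < -P.coroot α β := by linarith
  have hz : -(w β) = -(w (P.reflect α β)) + (-P.coroot α β) • (w α) := by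
    simp only [RootSystemData.reflect, map_sub, map_smul]
    module
  rw [hz]
  have hR : -(w (P.reflect α β)) + (-P.coroot α β) • (w α) ∈ P.R := by
    rw [← hz]
    exact P.neg_mem _ (hwR β hβ)
  exact P.add_smul_mem_pos h hq hm hR
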